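/- Let κ > 0, θ > 0, T > 0, t ∈ [0,T], σ² ≥ 0, φ(s) = (1 - e^{-κ(T-s)})/κ, m(s) = θ + (σ² - θ)e^{-κ(s-t)}, a_u² = ∫_u^T m_u(s) ds where m_u(s) = θ + (m(u) - θ)e^{-κ(s-u)}. Then for every u ∈ [t,T], m(u) ≤ a_u²/φ(u) and a_u ≥ √(θκ/2) φ(u). -/

import Mathlib

lemma exp_key_aux (y : ℝ) (hy : 0 ≤ y) :
    (1 - Real.exp (-y))^2 / 2 ≤ y - (1 - Real.exp (-y)) := by
  set g : ℝ → ℝ := fun z => z + 2 * Real.exp (-z) - Real.exp (-2*z) / 2 with hg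
  have hd : ∀ z : ℝ, HasDerivAt g (1 - 2 * Real.exp (-z) + Real.exp (-2*z)) z := by
    intro z
    have h1 : HasDerivAt (fun z : ℝ => Real.exp (-z)) (-Real.exp (-z)) z := by
      simpa [Function.comp_def] using (Real.hasDerivAt_exp (-z)).comp z ((hasDerivAt_id z).neg)
    have h2 : HasDerivAt (fun z : ℝ => Real.exp (-2*z)) (-2 * Real.exp (-2*z)) z := by
      have hin : HasDerivAt (fun z : ℝ => -2*z) (-2) z := by
        simpa using (hasDerivAt_id z).const_mul (-2)
      simpa [mul_comm] using hin.exp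
    have := ((hasDerivAt_id z).add (h1.const_mul 2)).sub (h2.div_const 2)
    refine this.congr_deriv ?_
    ring
  have hmono : MonotoneOn g (Set.Ici (0:ℝ)) := by
    apply monotoneOn_of_deriv_nonneg (convex_Ici 0)
    · exact fun z _ => (hd z).continuousAt.continuousWithinAt
    · exact fun z _ => (hd z).differentiableAt.differentiableWithinAt
    · intro z _
      rw [(hd z).deriv]
      have hE : Real.exp (-2*z) = Real.exp (-z) * Real.exp (-z) := by
        rw [← Real.exp_add]; ring_nf
      nlinarith [sq_nonneg (1 - Real.exp (-z))]
  have h0 : g 0 ≤ g y := hmono Set.self_mem_Ici hy hy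
  have hE : Real.exp (-2*y) = Real.exp (-y) * Real.exp (-y) := by
    rw [← Real.exp_add]; ring_nf
  simp only [hg] at h0
  rw [hE] at h0
  norm_num at h0
  nlinarith [h0]

theorem intermediate_time_bounds
    (κ θ T t σsq : ℝ) (hκ : 0 < κ) (hθ : 0 < θ) (hT : 0 < T)
    (ht : t ∈ Set.Icc (0:ℝ) T) (hσ : 0 ≤ σsq)
    (φ : ℝ → ℝ) (hφ : ∀ s, φ s = (1 - Real.exp (-κ * (T - s))) / κ)
    (m : ℝ → ℝ) (hm : ∀ s, m s = θ + (σsq - θ) * Real.exp (-κ * (s - t)))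
    (asq : ℝ → ℝ)
    (hasq : ∀ u, asq u = ∫ s in u..T, (θ + (m u - θ) * Real.exp (-κ * (s - u)))) :
    ∀ u ∈ Set.Icc t T,
      m u * φ u ≤ asq u ∧ Real.sqrt (θ * κ / 2) * φ u ≤ Real.sqrt (asq u) := by
  intro u hu
  obtain ⟨hut, huT⟩ := hu
  set E := Real.exp (-κ * (T - u)) with hE
  have hx : 0 ≤ T - u := by linarith
  have hE0 : 0 < E := Real.exp_pos _
  have hE1 : E ≤ 1 := Real.exp_le_one_iff.mpr (by nlinarith)
  have h1E : 1 - E ≤ κ * (T - u) := by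
    have := Real.add_one_le_exp (-κ * (T - u))
    rw [← hE] at this; nlinarith
  -- m u ≥ 0
  have hmu : 0 ≤ m u := by
    have hF0 : 0 < Real.exp (-κ * (u - t)) := Real.exp_pos _
    have hF1 : Real.exp (-κ * (u - t)) ≤ 1 := Real.exp_le_one_iff.mpr (by nlinarith)
    rw [hm]; nlinarith
  -- integral computation
  have hint : asq u = θ * (T - u) + (m u - θ) * ((1 - E) / κ) := by
    rw [hasq]
    set c := m u - θ with hc
    have hder : ∀ s ∈ Set.uIcc u T,
        HasDerivAt (fun s => θ * s - c / κ * Real.exp (-κ * (s - u)))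
          (θ + c * Real.exp (-κ * (s - u))) s := by
      intro s _
      have hin : HasDerivAt (fun s : ℝ => -κ * (s - u)) (-κ) s := by
        simpa using ((hasDerivAt_id s).sub_const u).const_mul (-κ)
      have hexp : HasDerivAt (fun s : ℝ => Real.exp (-κ * (s - u)))
          (-κ * Real.exp (-κ * (s - u))) s := by
        simpa [mul_comm, Function.comp_def] using (Real.hasDerivAt_exp (-κ * (s - u))).comp s hin
      have := ((hasDerivAt_id s).const_mul θ).sub (hexp.const_mul (c / κ))
      refine this.congr_deriv ?_
      field_simp
      ring
    have hcont : IntervalIntegrable (fun s => θ + c * Real.exp (-κ * (s - u)))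
        MeasureTheory.volume u T := by
      apply Continuous.intervalIntegrable
      continuity
    rw [intervalIntegral.integral_eq_sub_of_hasDerivAt hder hcont]
    rw [← hE]
    field_simp
    simp only [sub_self, mul_zero, neg_zero, Real.exp_zero]
    ring
  have hφu : φ u = (1 - E) / κ := by rw [hφ]
  have hφnn : 0 ≤ φ u := by rw [hφu]; apply div_nonneg (by linarith) hκ.le
  have e4 : (m u - θ) * ((1 - E) / κ) = m u * ((1 - E) / κ) - θ * ((1 - E) / κ) := by ring
  have e3 : 0 ≤ m u * ((1 - E) / κ) := by
    apply mul_nonneg hmu; rw [← hφu]; exact hφnn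
  constructor
  · -- first inequality
    rw [hint, hφu]
    have key1 : θ * ((1 - E) / κ) ≤ θ * (T - u) := by
      apply mul_le_mul_of_nonneg_left _ hθ.le
      rw [div_le_iff₀ hκ]; nlinarith
    nlinarith [key1]
  · -- second inequality
    have hkey := exp_key_aux (κ * (T - u)) (by positivity)
    rw [show -(κ * (T - u)) = -κ * (T - u) by ring, ← hE] at hkey
    have h2 : θ * κ / 2 * (φ u)^2 ≤ asq u := by
      rw [hint, hφu]
      have e1 : θ * κ / 2 * ((1 - E) / κ)^2 = θ / κ * ((1 - E)^2 / 2) := by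
        field_simp
      have e2 : θ / κ * (κ * (T - u) - (1 - E)) = θ * (T - u) - θ * ((1 - E) / κ) := by
        field_simp
      have hmul : θ / κ * ((1 - E)^2 / 2) ≤ θ / κ * (κ * (T - u) - (1 - E)) :=
        mul_le_mul_of_nonneg_left hkey (by positivity)
      rw [e1, e4]
      linarith [hmul, e2, e3]
    calc Real.sqrt (θ * κ / 2) * φ u
        = Real.sqrt (θ * κ / 2 * (φ u)^2) := by
          rw [Real.sqrt_mul' _ (sq_nonneg _), Real.sqrt_sq hφnn]
      _ ≤ Real.sqrt (asq u) := Real.sqrt_le_sqrt h2
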